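/- arXiv:1602.04507 — 4 statements merged into one kernel-verified Lean document; each statement's English description precedes it below -/
import Mathlib

section
/- Let D be a superdialgebra over R with a bar-unit 1. Then for all homogeneous a, b, c ∈ D one has a ⊣ [b, c] = [a, b] ⊣ c − (−1)^{|b||c|} ([a ⊣ c, b]) ⊣ 1, where [x, y] := x ⊣ y − (−1)^{|x||y|} y ⊢ x. -/
/-- The sign `(−1)^{αβ}` for degrees `α β : ℤ/2`, as an integer. -/
def ssign (α β : ZMod 2) : ℤ := (-1 : ℤ) ^ (α * β).val

/-- An associative superdialgebra over a commutative unital ring `R`. -/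
structure Superdialgebra (R : Type*) (D : Type*) [CommRing R] [AddCommGroup D]
    [Module R D] where
  grade : ZMod 2 → Submodule R D
  isInternal : DirectSum.IsInternal grade
  ld : D →ₗ[R] D →ₗ[R] D
  rd : D →ₗ[R] D →ₗ[R] D
  ld_assoc : ∀ a b c : D, ld (ld a b) c = ld a (ld b c)
  rd_assoc : ∀ a b c : D, rd (rd a b) c = rd a (rd b c)
  ld_mem : ∀ (α β : ZMod 2) (a b : D), a ∈ grade α → b ∈ grade β → ld a b ∈ grade (α + β)
  rd_mem : ∀ (α β : ZMod 2) (a b : D), a ∈ grade α → b ∈ grade β → rd a b ∈ grade (α + β)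
  di1 : ∀ a b c : D, ld a (ld b c) = ld a (rd b c)
  di2 : ∀ a b c : D, ld (rd a b) c = rd a (ld b c)
  di3 : ∀ a b c : D, rd (ld a b) c = rd (rd a b) c

variable {R D : Type*} [CommRing R] [AddCommGroup D] [Module R D]

/-- A bar-unit of a superdialgebra: an even element `e` with `a ⊣ e = a = e ⊢ a`. -/
def IsBarUnit (S : Superdialgebra R D) (e : D) : Prop :=
  e ∈ S.grade 0 ∧ ∀ a : D, S.ld a e = a ∧ S.rd e a = a

/-- The bracket `[a,b] = a ⊣ b − (−1)^{αβ} b ⊢ a` of elements `a, b` of degrees `α, β`. -/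
def sbracket (S : Superdialgebra R D) (α β : ZMod 2) (a b : D) : D :=
  S.ld a b - ssign α β • S.rd b a

lemma sign_aux (α β γ : ZMod 2) : ssign β γ * ssign (α + γ) β = ssign α β := by
  revert α β γ; decide

/-- in a unital superdialgebra, for homogeneous `a, b, c` one has
`a ⊣ [b,c] = [a,b] ⊣ c − (−1)^{|b||c|} ([a ⊣ c, b]) ⊣ 1`. -/
theorem barUnit_identity_one
    (S : Superdialgebra R D) (e : D) (he : IsBarUnit S e)
    (α β γ : ZMod 2) (a b c : D)
    (ha : a ∈ S.grade α) (hb : b ∈ S.grade β) (hc : c ∈ S.grade γ) :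
    S.ld a (sbracket S β γ b c) =
      S.ld (sbracket S α β a b) c -
        ssign β γ • S.ld (sbracket S (α + γ) β (S.ld a c) b) e := by

  obtain ⟨-, hu⟩ := he
  have h1 : ∀ x : D, S.ld x e = x := fun x => (hu x).1
  have hsign : ssign β γ * ssign (α + γ) β = ssign α β := sign_aux α β γ
  simp only [sbracket, map_sub, map_zsmul, LinearMap.sub_apply, LinearMap.smul_apply, h1]
  rw [← S.di1 a c b, ← S.ld_assoc a c b, S.di2 b a c, ← S.ld_assoc a b c,
    smul_sub, smul_smul, hsign]
  abel
end

section
/- Let D be a superdialgebra over R with a bar-unit 1. Then for all homogeneous a, b, c ∈ D one has [a, b] ⊢ c = −(−1)^{|b||c|} a ⊢ [c, b] + (−1)^{|b||c|} 1 ⊢ [a ⊢ c, b], where [x, y] := x ⊣ y − (−1)^{|x||y|} y ⊢ x. -/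
variable {R D : Type*} [CommRing R] [AddCommGroup D] [Module R D]

lemma ssign_mul_self : ∀ β γ : ZMod 2, ssign β γ * ssign γ β = 1 := by decide

lemma ssign_add_left : ∀ α γ β : ZMod 2, ssign β γ * ssign (α + γ) β = ssign α β := by decide

/-- in a unital superdialgebra, for homogeneous `a, b, c` one has
`[a,b] ⊢ c = −(−1)^{|b||c|} a ⊢ [c,b] + (−1)^{|b||c|} 1 ⊢ [a ⊢ c, b]`. -/
theorem barUnit_identity_two
    (S : Superdialgebra R D) (e : D) (he : IsBarUnit S e)
    (α β γ : ZMod 2) (a b c : D)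
    (ha : a ∈ S.grade α) (hb : b ∈ S.grade β) (hc : c ∈ S.grade γ) :
    S.rd (sbracket S α β a b) c =
      -(ssign β γ • S.rd a (sbracket S γ β c b)) +
        ssign β γ • S.rd e (sbracket S (α + γ) β (S.rd a c) b) := by
  have hre : ∀ x : D, S.rd e x = x := fun x => (he.2 x).2
  simp only [sbracket, map_sub, map_zsmul, LinearMap.sub_apply, LinearMap.smul_apply, hre]
  rw [S.di3 a b c, S.rd_assoc, S.rd_assoc, ← S.di2 a c b, smul_sub, smul_sub,
    smul_smul, smul_smul, ssign_mul_self β γ, one_smul, ssign_add_left α γ β]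
  abel
end

section
/- Let D be a superdialgebra over R with a bar-unit 1. Writing [D,D] for the R-submodule spanned by all [a,b] := a ⊣ b − (−1)^{|a||b|} b ⊢ a with a, b homogeneous, and, for submodules S, T ⊆ D, S ⊣ T (resp. S ⊢ T) for the R-submodule spanned by all s ⊣ t (resp. s ⊢ t) with s ∈ S, t ∈ T, one has: D ⊣ [D,D] ⊆ [D,D] ⊣ D, [D,D] ⊢ D ⊆ D ⊢ [D,D], and [D,D] ⊣ D = D ⊢ [D,D]. -/
variable {R D : Type*} [CommRing R] [AddCommGroup D] [Module R D]

/-- The set of super-commutators `a ⊣ b − (−1)^{|a||b|} b ⊢ a` of homogeneous elements. -/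
def commGens (S : Superdialgebra R D) : Set D :=
  {z : D | ∃ (α β : ZMod 2) (a b : D), a ∈ S.grade α ∧ b ∈ S.grade β ∧
    z = S.ld a b - ssign α β • S.rd b a}

/-- `[D,D]`: the `R`-submodule spanned by the super-commutators. -/
def commSub (S : Superdialgebra R D) : Submodule R D :=
  Submodule.span R (commGens S)


/-- `c ⊣ [x,y] = [c,x] ⊣ y − (−1)^{αβ} [c⊣y, x] ⊣ e`. -/
private lemma sdia_id1 (S : Superdialgebra R D) (e : D) (hld1 : ∀ a, S.ld a e = a)
    (γ α β : ZMod 2) (c x y : D) :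
    S.ld c (sbracket S α β x y)
      = S.ld (sbracket S γ α c x) y
        - ssign α β • S.ld (sbracket S (γ+β) α (S.ld c y) x) e := by
  simp only [sbracket, map_sub, map_zsmul, LinearMap.sub_apply, LinearMap.smul_apply,
    smul_sub, smul_smul, hld1, S.ld_assoc, S.di1, S.di2, S.di3, S.rd_assoc]
  match_scalars <;> (try ring) <;> (revert γ α β; decide)

/-- `[x,y] ⊣ d = e ⊢ [x, y⊣d] − (−1)^{αβ} y ⊢ [x,d]`. -/
private lemma sdia_id3a (S : Superdialgebra R D) (e : D) (hrd1 : ∀ a, S.rd e a = a)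
    (α β δ : ZMod 2) (x y d : D) :
    S.ld (sbracket S α β x y) d
      = S.rd e (sbracket S α (β+δ) x (S.ld y d))
        - ssign α β • S.rd y (sbracket S α δ x d) := by
  simp only [sbracket, map_sub, map_zsmul, LinearMap.sub_apply, LinearMap.smul_apply,
    smul_sub, smul_smul, hrd1, S.ld_assoc, S.di1, S.di2, S.di3, S.rd_assoc]
  match_scalars <;> (try ring) <;> (revert α β δ; decide)

/-- `d ⊢ [x,y] = (−1)^{αδ} ([x, d⊢y] ⊣ e − [x,d] ⊣ y)`. -/
private lemma sdia_id3b (S : Superdialgebra R D) (e : D) (hld1 : ∀ a, S.ld a e = a)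
    (α β δ : ZMod 2) (x y d : D) :
    S.rd d (sbracket S α β x y)
      = ssign α δ • S.ld (sbracket S α (δ+β) x (S.rd d y)) e
        - ssign α δ • S.ld (sbracket S α δ x d) y := by
  simp only [sbracket, map_sub, map_zsmul, LinearMap.sub_apply, LinearMap.smul_apply,
    smul_sub, smul_smul, hld1, S.ld_assoc, S.di1, S.di2, S.di3, S.rd_assoc]
  match_scalars <;> (try ring) <;> (revert α β δ; decide)

/-- `[x,y] ⊢ c` as a combination of `c ⊣ [x,y]`, brackets-⊣ and ⊢-brackets. -/
private lemma sdia_id2 (S : Superdialgebra R D) (α β γ : ZMod 2) (x y c : D) :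
    S.rd (sbracket S α β x y) c
      = (ssign γ α * ssign γ β) • S.ld c (sbracket S α β x y)
        - (ssign γ α * ssign γ β) • S.ld (sbracket S γ α c x) y
        + (ssign α β * (ssign γ α * ssign γ β)) • S.ld (sbracket S γ β c y) x
        - ssign γ β • S.rd x (sbracket S γ β c y)
        + (ssign α β * ssign γ α) • S.rd y (sbracket S γ α c x) := by
  simp only [sbracket, map_sub, map_zsmul, LinearMap.sub_apply, LinearMap.smul_apply,
    smul_sub, smul_smul, S.ld_assoc, S.di1, S.di2, S.di3, S.rd_assoc]
  match_scalars <;> (try ring) <;> (revert α β γ; decide)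

/-- in a unital superdialgebra `D`,
`D ⊣ [D,D] ⊆ [D,D] ⊣ D`, `[D,D] ⊢ D ⊆ D ⊢ [D,D]` and `[D,D] ⊣ D = D ⊢ [D,D]`
(`S ⊣ T` resp. `S ⊢ T` denoting the span of the corresponding products). -/
theorem commutator_submodule_identities
    (S : Superdialgebra R D) (e : D) (he : IsBarUnit S e) :
    Submodule.map₂ S.ld ⊤ (commSub S) ≤ Submodule.map₂ S.ld (commSub S) ⊤ ∧
    Submodule.map₂ S.rd (commSub S) ⊤ ≤ Submodule.map₂ S.rd ⊤ (commSub S) ∧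
    Submodule.map₂ S.ld (commSub S) ⊤ = Submodule.map₂ S.rd ⊤ (commSub S) := by
  obtain ⟨he0, hunit⟩ := he
  have hld1 : ∀ a, S.ld a e = a := fun a => (hunit a).1
  have hrd1 : ∀ a, S.rd e a = a := fun a => (hunit a).2
  have hbr : ∀ (α β : ZMod 2) (a b : D), a ∈ S.grade α → b ∈ S.grade β →
      sbracket S α β a b ∈ commSub S :=
    fun α β a b ha hb => Submodule.subset_span ⟨α, β, a, b, ha, hb, rfl⟩
  have htop : ∀ c : D, c ∈ ⨆ γ, S.grade γ := fun c => by
    rw [S.isInternal.submodule_iSup_eq_top]; exact Submodule.mem_top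
  -- Claim 1 : `c ⊣ z ∈ [D,D] ⊣ D` for `z ∈ [D,D]`.
  have claim1 : ∀ z ∈ commSub S, ∀ c : D,
      S.ld c z ∈ Submodule.map₂ S.ld (commSub S) ⊤ := by
    intro z hz
    induction hz using Submodule.span_induction with
    | mem w hw =>
      obtain ⟨α, β, x, y, hx, hy, rfl⟩ := hw
      have key : ∀ c, c ∈ (⨆ γ, S.grade γ) →
          S.ld c (sbracket S α β x y) ∈ Submodule.map₂ S.ld (commSub S) ⊤ := by
        intro c hc
        induction hc using Submodule.iSup_induction' with
        | mem γ c hcγ =>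
          rw [sdia_id1 S e hld1 γ α β c x y]
          exact Submodule.sub_mem _
            (Submodule.apply_mem_map₂ _ (hbr γ α c x hcγ hx) Submodule.mem_top)
            (zsmul_mem (Submodule.apply_mem_map₂ _
              (hbr (γ+β) α (S.ld c y) x (S.ld_mem γ β c y hcγ hy) hx)
              Submodule.mem_top) _)
        | zero => simp only [map_zero, LinearMap.zero_apply]; exact zero_mem _
        | add a b ha hb iha ihb =>
          simp only [map_add, LinearMap.add_apply]; exact add_mem iha ihb
      exact fun c => key c (htop c)
    | zero => intro c; simp only [map_zero]; exact zero_mem _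
    | add a b ha hb iha ihb =>
      intro c; simp only [map_add]; exact add_mem (iha c) (ihb c)
    | smul r a ha iha =>
      intro c; simp only [map_smul]; exact Submodule.smul_mem _ _ (iha c)
  -- Claim 3a : `z ⊣ d ∈ D ⊢ [D,D]` for `z ∈ [D,D]`.
  have claim3a : ∀ z ∈ commSub S, ∀ d : D,
      S.ld z d ∈ Submodule.map₂ S.rd ⊤ (commSub S) := by
    intro z hz
    induction hz using Submodule.span_induction with
    | mem w hw =>
      obtain ⟨α, β, x, y, hx, hy, rfl⟩ := hw
      have key : ∀ d, d ∈ (⨆ δ, S.grade δ) →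
          S.ld (sbracket S α β x y) d ∈ Submodule.map₂ S.rd ⊤ (commSub S) := by
        intro d hd
        induction hd using Submodule.iSup_induction' with
        | mem δ d hdδ =>
          rw [sdia_id3a S e hrd1 α β δ x y d]
          exact Submodule.sub_mem _
            (Submodule.apply_mem_map₂ _ Submodule.mem_top
              (hbr α (β+δ) x (S.ld y d) hx (S.ld_mem β δ y d hy hdδ)))
            (zsmul_mem (Submodule.apply_mem_map₂ _ Submodule.mem_top
              (hbr α δ x d hx hdδ)) _)
        | zero => simp only [map_zero]; exact zero_mem _
        | add a b ha hb iha ihb =>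
          simp only [map_add]; exact add_mem iha ihb
      exact fun d => key d (htop d)
    | zero => intro d; simp only [map_zero, LinearMap.zero_apply]; exact zero_mem _
    | add a b ha hb iha ihb =>
      intro d; simp only [map_add, LinearMap.add_apply]; exact add_mem (iha d) (ihb d)
    | smul r a ha iha =>
      intro d; simp only [map_smul, LinearMap.smul_apply]
      exact Submodule.smul_mem _ _ (iha d)
  -- Claim 3b : `d ⊢ z ∈ [D,D] ⊣ D` for `z ∈ [D,D]`.
  have claim3b : ∀ z ∈ commSub S, ∀ d : D,
      S.rd d z ∈ Submodule.map₂ S.ld (commSub S) ⊤ := by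
    intro z hz
    induction hz using Submodule.span_induction with
    | mem w hw =>
      obtain ⟨α, β, x, y, hx, hy, rfl⟩ := hw
      have key : ∀ d, d ∈ (⨆ δ, S.grade δ) →
          S.rd d (sbracket S α β x y) ∈ Submodule.map₂ S.ld (commSub S) ⊤ := by
        intro d hd
        induction hd using Submodule.iSup_induction' with
        | mem δ d hdδ =>
          rw [sdia_id3b S e hld1 α β δ x y d]
          exact Submodule.sub_mem _
            (zsmul_mem (Submodule.apply_mem_map₂ _
              (hbr α (δ+β) x (S.rd d y) hx (S.rd_mem δ β d y hdδ hy))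
              Submodule.mem_top) _)
            (zsmul_mem (Submodule.apply_mem_map₂ _
              (hbr α δ x d hx hdδ) Submodule.mem_top) _)
        | zero => simp only [map_zero, LinearMap.zero_apply]; exact zero_mem _
        | add a b ha hb iha ihb =>
          simp only [map_add, LinearMap.add_apply]; exact add_mem iha ihb
      exact fun d => key d (htop d)
    | zero => intro d; simp only [map_zero]; exact zero_mem _
    | add a b ha hb iha ihb =>
      intro d; simp only [map_add]; exact add_mem (iha d) (ihb d)
    | smul r a ha iha =>
      intro d; simp only [map_smul]; exact Submodule.smul_mem _ _ (iha d)
  -- Third statement.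
  have eq3 : Submodule.map₂ S.ld (commSub S) ⊤ = Submodule.map₂ S.rd ⊤ (commSub S) :=
    le_antisymm (Submodule.map₂_le.2 fun z hz d _ => claim3a z hz d)
      (Submodule.map₂_le.2 fun d _ z hz => claim3b z hz d)
  -- Claim 2 : `z ⊢ c ∈ D ⊢ [D,D]` for `z ∈ [D,D]`.
  have claim2 : ∀ z ∈ commSub S, ∀ c : D,
      S.rd z c ∈ Submodule.map₂ S.rd ⊤ (commSub S) := by
    intro z hz
    induction hz using Submodule.span_induction with
    | mem w hw =>
      obtain ⟨α, β, x, y, hx, hy, rfl⟩ := hw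
      have key : ∀ c, c ∈ (⨆ γ, S.grade γ) →
          S.rd (sbracket S α β x y) c ∈ Submodule.map₂ S.rd ⊤ (commSub S) := by
        intro c hc
        induction hc using Submodule.iSup_induction' with
        | mem γ c hcγ =>
          rw [sdia_id2 S α β γ x y c]
          have h1 : S.ld c (sbracket S α β x y) ∈ Submodule.map₂ S.rd ⊤ (commSub S) :=
            eq3 ▸ claim1 _ (hbr α β x y hx hy) c
          have h2 : S.ld (sbracket S γ α c x) y ∈ Submodule.map₂ S.rd ⊤ (commSub S) :=
            claim3a _ (hbr γ α c x hcγ hx) y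
          have h3 : S.ld (sbracket S γ β c y) x ∈ Submodule.map₂ S.rd ⊤ (commSub S) :=
            claim3a _ (hbr γ β c y hcγ hy) x
          have h4 : S.rd x (sbracket S γ β c y) ∈ Submodule.map₂ S.rd ⊤ (commSub S) :=
            Submodule.apply_mem_map₂ _ Submodule.mem_top (hbr γ β c y hcγ hy)
          have h5 : S.rd y (sbracket S γ α c x) ∈ Submodule.map₂ S.rd ⊤ (commSub S) :=
            Submodule.apply_mem_map₂ _ Submodule.mem_top (hbr γ α c x hcγ hx)
          exact add_mem (Submodule.sub_mem _
            (add_mem (Submodule.sub_mem _ (zsmul_mem h1 _) (zsmul_mem h2 _))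
              (zsmul_mem h3 _)) (zsmul_mem h4 _)) (zsmul_mem h5 _)
        | zero => simp only [map_zero]; exact zero_mem _
        | add a b ha hb iha ihb =>
          simp only [map_add]; exact add_mem iha ihb
      exact fun c => key c (htop c)
    | zero => intro c; simp only [map_zero, LinearMap.zero_apply]; exact zero_mem _
    | add a b ha hb iha ihb =>
      intro c; simp only [map_add, LinearMap.add_apply]; exact add_mem (iha c) (ihb c)
    | smul r a ha iha =>
      intro c; simp only [map_smul, LinearMap.smul_apply]
      exact Submodule.smul_mem _ _ (iha c)
  exact ⟨Submodule.map₂_le.2 fun c _ z hz => claim1 z hz c,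
    Submodule.map₂_le.2 fun z hz c _ => claim2 z hz c, eq3⟩
end

section
/- Let D be a superdialgebra over R with a bar-unit 1, and let m, n be nonnegative integers with m + n ≥ 2. Then the commutator subalgebra sl(m,n,D) = [gl(m,n,D), gl(m,n,D)] of the general Leibniz superalgebra gl(m,n,D) equals {x ∈ gl(m,n,D) : Str₁(x) ∈ [D,D]}, where [D,D] is the R-submodule of D spanned by all a ⊣ b − (−1)^{|a||b|} b ⊢ a with a, b homogeneous. -/
variable {R D : Type*} [CommRing R] [AddCommGroup D] [Module R D]

/-- The parity of the index `i ∈ {1,…,m+n}`: `0` for `i ≤ m` and `1` for `i > m`. -/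
def pgr (m : ℕ) {N : ℕ} (i : Fin N) : ZMod 2 := if (i : ℕ) < m then 0 else 1

/-- Matrix product of matrices over a superdialgebra using `⊣` on entries. -/
def mLd (S : Superdialgebra R D) {N : ℕ} (x y : Matrix (Fin N) (Fin N) D) :
    Matrix (Fin N) (Fin N) D :=
  Matrix.of fun i j => ∑ l : Fin N, S.ld (x i l) (y l j)

/-- Matrix product of matrices over a superdialgebra using `⊢` on entries. -/
def mRd (S : Superdialgebra R D) {N : ℕ} (x y : Matrix (Fin N) (Fin N) D) :
    Matrix (Fin N) (Fin N) D :=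
  Matrix.of fun i j => ∑ l : Fin N, S.rd (x i l) (y l j)

/-- The grading of the general Leibniz superalgebra `gl(m,n,D)`: a matrix is homogeneous
of degree `α` when its `(i,j)` entry lies in `D_{α + p(i) + p(j)}` (i.e. `e_ij(a)` has
degree `p(i) + p(j) + |a|`). -/
def glGrade (S : Superdialgebra R D) (m n : ℕ) (α : ZMod 2) :
    Submodule R (Matrix (Fin (m + n)) (Fin (m + n)) D) where
  carrier := {x | ∀ i j, x i j ∈ S.grade (α + pgr m i + pgr m j)}
  add_mem' := fun hx hy i j => Submodule.add_mem _ (hx i j) (hy i j)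
  zero_mem' := fun _ _ => Submodule.zero_mem _
  smul_mem' := fun c _ hx i j => Submodule.smul_mem _ c (hx i j)

/-- `sl(m,n,D) = [gl(m,n,D), gl(m,n,D)]`: the `R`-span of all brackets
`[x,y] = x ⊣ y − (−1)^{|x||y|} y ⊢ x` of (homogeneous) elements of `gl(m,n,D)`. -/
def slSub (S : Superdialgebra R D) (m n : ℕ) :
    Submodule R (Matrix (Fin (m + n)) (Fin (m + n)) D) :=
  Submodule.span R {z | ∃ (α β : ZMod 2) (x y : Matrix (Fin (m + n)) (Fin (m + n)) D),
    x ∈ glGrade S m n α ∧ y ∈ glGrade S m n β ∧ z = mLd S x y - ssign α β • mRd S y x}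

section Aux
variable {R D : Type*} [CommRing R] [AddCommGroup D] [Module R D]

/-- The decomposition equivalence coming from internality of the grading. -/
noncomputable def sdec (S : Superdialgebra R D) : D ≃ₗ[R] DirectSum (ZMod 2) fun α => (S.grade α : Submodule R D) :=
  (LinearEquiv.ofBijective (DirectSum.coeLinearMap S.grade) S.isInternal).symm

/-- Projection onto the degree `α` component, as a map `D →ₗ[R] D`. -/
noncomputable def projL (S : Superdialgebra R D) (α : ZMod 2) : D →ₗ[R] D :=
  (S.grade α).subtype ∘ₗ (DirectSum.component R (ZMod 2) (fun β => (S.grade β : Submodule R D)) α)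
    ∘ₗ (sdec S).toLinearMap

lemma projL_apply (S : Superdialgebra R D) (α : ZMod 2) (a : D) :
    projL S α a = (sdec S a α : D) := rfl

lemma projL_mem (S : Superdialgebra R D) (α : ZMod 2) (a : D) :
    projL S α a ∈ S.grade α := (sdec S a α).2

lemma projL_of_mem {S : Superdialgebra R D} {α : ZMod 2} {a : D} (ha : a ∈ S.grade α) :
    projL S α a = a := by
  rw [projL_apply, sdec, S.isInternal.ofBijective_coeLinearMap_of_mem ha]

lemma projL_of_ne {S : Superdialgebra R D} {α β : ZMod 2} {a : D} (ha : a ∈ S.grade α)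
    (hne : α ≠ β) : projL S β a = 0 := by
  rw [projL_apply, sdec]
  have := S.isInternal.ofBijective_coeLinearMap_of_ne hne (⟨a, ha⟩ : S.grade α)
  rw [Submodule.coe_mk] at this
  rw [this, Submodule.coe_zero]

lemma sum_projL (S : Superdialgebra R D) (a : D) :
    ∑ α : ZMod 2, projL S α a = a := by
  have h1 : DirectSum.coeLinearMap S.grade (sdec S a) = a := by
    have := (LinearEquiv.ofBijective (DirectSum.coeLinearMap S.grade)
      S.isInternal).apply_symm_apply a
    exact this
  calc ∑ α : ZMod 2, projL S α a
      = ∑ α : ZMod 2, DirectSum.coeLinearMap S.grade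
          (DirectSum.of (fun β => (S.grade β : Submodule R D)) α (sdec S a α)) := by
        simp [projL_apply]
    _ = DirectSum.coeLinearMap S.grade (∑ α : ZMod 2,
          DirectSum.of (fun β => (S.grade β : Submodule R D)) α (sdec S a α)) := by
        rw [map_sum]
    _ = a := by rw [DirectSum.sum_univ_of, h1]

end Aux
section Aux2
variable {R D : Type*} [CommRing R] [AddCommGroup D] [Module R D]

/-- Entry extraction as a linear map. -/
def entryL (N : ℕ) (i j : Fin N) : Matrix (Fin N) (Fin N) D →ₗ[R] D where
  toFun x := x i j
  map_add' _ _ := rfl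
  map_smul' _ _ := rfl

/-- `stdBasisMatrix i j` as a linear map. -/
def stdL (N : ℕ) (i j : Fin N) : D →ₗ[R] Matrix (Fin N) (Fin N) D where
  toFun a := Matrix.single i j a
  map_add' a b := by
    ext p q
    simp only [Matrix.single, Matrix.of_apply, Matrix.add_apply]
    split <;> simp
  map_smul' c a := by
    ext p q
    simp only [Matrix.single, Matrix.of_apply, Matrix.smul_apply, RingHom.id_apply]
    split <;> simp

lemma stdL_apply (N : ℕ) (i j : Fin N) (a : D) :
    stdL (R := R) N i j a = Matrix.single i j a := rfl

lemma std_mem_glGrade (S : Superdialgebra R D) (m n : ℕ) {γ : ZMod 2}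
    (i j : Fin (m + n)) {a : D} (ha : a ∈ S.grade γ) :
    Matrix.single i j a ∈ glGrade S m n (γ + pgr m i + pgr m j) := by
  intro p q
  simp only [Matrix.single, Matrix.of_apply]
  split
  · rename_i h
    obtain ⟨rfl, rfl⟩ := h
    have h4 : ∀ g u v : ZMod 2, g + u + v + u + v = g := by decide
    rw [h4]; exact ha
  · exact Submodule.zero_mem _

lemma mLd_std (S : Superdialgebra R D) {N : ℕ} (i j k l : Fin N) (a b : D) :
    mLd S (Matrix.single i j a) (Matrix.single k l b) =
      if j = k then Matrix.single i l (S.ld a b) else 0 := by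
  ext p q
  simp only [mLd, Matrix.of_apply, Matrix.single]
  by_cases hjk : j = k
  · subst hjk
    rw [if_pos rfl]
    rw [Finset.sum_eq_single j]
    · simp only [Matrix.of_apply]
      by_cases hp : i = p
      · by_cases hq : l = q
        · simp [hp, hq]
        · simp [hq]
      · simp [hp]
    · intro t _ ht
      by_cases hp : i = p ∧ j = t
      · exact absurd hp.2.symm ht
      · rw [if_neg hp]; simp
    · intro h; exact absurd (Finset.mem_univ j) h
  · rw [if_neg hjk]
    apply Finset.sum_eq_zero
    intro t _
    by_cases h1 : i = p ∧ j = t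
    · rw [if_pos h1, if_neg (fun h2 => hjk (h1.2.trans h2.1.symm))]
      simp
    · rw [if_neg h1]; simp
  
lemma mRd_std (S : Superdialgebra R D) {N : ℕ} (i j k l : Fin N) (a b : D) :
    mRd S (Matrix.single i j a) (Matrix.single k l b) =
      if j = k then Matrix.single i l (S.rd a b) else 0 := by
  ext p q
  simp only [mRd, Matrix.of_apply, Matrix.single]
  by_cases hjk : j = k
  · subst hjk
    rw [if_pos rfl]
    rw [Finset.sum_eq_single j]
    · simp only [Matrix.of_apply]
      by_cases hp : i = p
      · by_cases hq : l = q
        · simp [hp, hq]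
        · simp [hq]
      · simp [hp]
    · intro t _ ht
      by_cases hp : i = p ∧ j = t
      · exact absurd hp.2.symm ht
      · rw [if_neg hp]; simp
    · intro h; exact absurd (Finset.mem_univ j) h
  · rw [if_neg hjk]
    apply Finset.sum_eq_zero
    intro t _
    by_cases h1 : i = p ∧ j = t
    · rw [if_pos h1, if_neg (fun h2 => hjk (h1.2.trans h2.1.symm))]
      simp
    · rw [if_neg h1]; simp

end Aux2
section Aux3
variable {R D : Type*} [CommRing R] [AddCommGroup D] [Module R D]

/-- The supertrace, constructed from the grading projections. -/
noncomputable def StrDef (S : Superdialgebra R D) (m n : ℕ) :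
    Matrix (Fin (m + n)) (Fin (m + n)) D →ₗ[R] D where
  toFun x := ∑ i : Fin (m + n), ∑ α : ZMod 2,
    ((-1 : ℤ) ^ (pgr m i * (pgr m i + α)).val) • projL S α (x i i)
  map_add' x y := by
    simp only [Matrix.add_apply, map_add, smul_add, Finset.sum_add_distrib]
  map_smul' c x := by
    simp only [Matrix.smul_apply, map_smul, RingHom.id_apply, Finset.smul_sum]
    congr 1; ext i; congr 1; ext α
    rw [smul_comm]

lemma StrDef_spec (S : Superdialgebra R D) (m n : ℕ) (i j : Fin (m + n)) (α : ZMod 2)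
    (a : D) (ha : a ∈ S.grade α) :
    StrDef S m n (Matrix.single i j a) =
      if i = j then ((-1 : ℤ) ^ (pgr m i * (pgr m i + α)).val) • a else 0 := by
  have hentry : ∀ k : Fin (m + n), Matrix.single i j a k k =
      if i = k ∧ j = k then a else 0 := fun k => rfl
  show (∑ k : Fin (m + n), ∑ β : ZMod 2,
    ((-1 : ℤ) ^ (pgr m k * (pgr m k + β)).val) • projL S β (Matrix.single i j a k k)) = _
  by_cases hij : i = j
  · subst hij
    rw [Finset.sum_eq_single i]
    · rw [if_pos rfl]
      have : Matrix.single i i a i i = a := by rw [hentry]; simp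
      rw [this]
      rw [Finset.sum_eq_single α]
      · rw [projL_of_mem ha]
      · intro β _ hβ
        rw [projL_of_ne ha (Ne.symm hβ), smul_zero]
      · intro h; exact absurd (Finset.mem_univ α) h
    · intro k _ hk
      have : Matrix.single i i a k k = 0 := by
        rw [hentry, if_neg]; rintro ⟨rfl, -⟩; exact hk rfl
      rw [this]
      simp
    · intro h; exact absurd (Finset.mem_univ i) h
  · rw [if_neg hij]
    apply Finset.sum_eq_zero
    intro k _
    have : Matrix.single i j a k k = 0 := by
      rw [hentry, if_neg]; rintro ⟨rfl, rfl⟩; exact hij rfl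
    rw [this]
    simp

/-- Spanning: a submodule containing all homogeneous matrix units is everything. -/
lemma matrix_span (S : Superdialgebra R D) {N : ℕ}
    (M : Submodule R (Matrix (Fin N) (Fin N) D))
    (h : ∀ (i j : Fin N) (α : ZMod 2) (a : D), a ∈ S.grade α →
      Matrix.single i j a ∈ M)
    (x : Matrix (Fin N) (Fin N) D) : x ∈ M := by
  rw [Matrix.matrix_eq_sum_single x]
  apply Submodule.sum_mem
  intro i _
  apply Submodule.sum_mem
  intro j _
  have hx : x i j = ∑ α : ZMod 2, projL S α (x i j) := (sum_projL S (x i j)).symm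
  rw [hx, show Matrix.single i j (∑ α : ZMod 2, projL S α (x i j)) =
    ∑ α : ZMod 2, Matrix.single i j (projL S α (x i j)) from
      map_sum (stdL (R := R) N i j) _ _]
  exact Submodule.sum_mem _ fun α _ => h i j α _ (projL_mem S α (x i j))

end Aux3
section Aux4
variable {R D : Type*} [CommRing R] [AddCommGroup D] [Module R D]

lemma Str_mulLike (S : Superdialgebra R D) (m n : ℕ)
    (Str : Matrix (Fin (m + n)) (Fin (m + n)) D →ₗ[R] D)
    (hStr : ∀ (i j : Fin (m + n)) (α : ZMod 2) (a : D), a ∈ S.grade α →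
      Str (Matrix.single i j a) =
        if i = j then ((-1 : ℤ) ^ (pgr m i * (pgr m i + α)).val) • a else 0)
    (op : D →ₗ[R] D →ₗ[R] D)
    (hop : ∀ (γ δ : ZMod 2) (a b : D), a ∈ S.grade γ → b ∈ S.grade δ →
      op a b ∈ S.grade (γ + δ))
    (α β : ZMod 2) (x y : Matrix (Fin (m + n)) (Fin (m + n)) D)
    (hx : x ∈ glGrade S m n α) (hy : y ∈ glGrade S m n β) :
    Str (Matrix.of fun i j => ∑ l : Fin (m + n), op (x i l) (y l j)) =
      ∑ i : Fin (m + n), ∑ k : Fin (m + n),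
        ((-1 : ℤ) ^ (pgr m i * (pgr m i + (α + β))).val) • op (x i k) (y k i) := by
  set M : Matrix (Fin (m + n)) (Fin (m + n)) D :=
    Matrix.of fun i j => ∑ l : Fin (m + n), op (x i l) (y l j) with hM
  have hMe : M = ∑ i : Fin (m + n), ∑ j : Fin (m + n), ∑ k : Fin (m + n),
      Matrix.single i j (op (x i k) (y k j)) := by
    rw [Matrix.matrix_eq_sum_single M]
    refine Finset.sum_congr rfl fun i _ => Finset.sum_congr rfl fun j _ => ?_
    have : M i j = ∑ k : Fin (m + n), op (x i k) (y k j) := rfl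
    rw [this]
    exact map_sum (stdL (R := R) (m + n) i j) (fun k => op (x i k) (y k j)) Finset.univ
  rw [hMe, map_sum]
  refine Finset.sum_congr rfl fun i _ => ?_
  rw [map_sum]
  rw [Finset.sum_eq_single i]
  · rw [map_sum]
    refine Finset.sum_congr rfl fun k _ => ?_
    have hmem : op (x i k) (y k i) ∈ S.grade (α + β) := by
      have h1 := hop _ _ _ _ (hx i k) (hy k i)
      have h2 : ∀ a b u v : ZMod 2, a + u + v + (b + v + u) = a + b := by decide
      rwa [h2] at h1
    rw [hStr i i _ _ hmem, if_pos rfl]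
  · intro j _ hji
    rw [map_sum]
    apply Finset.sum_eq_zero
    intro k _
    have hmem : op (x i k) (y k j) ∈ S.grade (α + β + pgr m i + pgr m j) := by
      have h1 := hop _ _ _ _ (hx i k) (hy k j)
      have h2 : ∀ a b u v w : ZMod 2, a + u + w + (b + w + v) = a + b + u + v := by decide
      rwa [h2] at h1
    rw [hStr i j _ _ hmem, if_neg (fun h => hji h.symm)]
  · intro h; exact absurd (Finset.mem_univ i) h

lemma Str_bracket_mem (S : Superdialgebra R D) (m n : ℕ)
    (Str : Matrix (Fin (m + n)) (Fin (m + n)) D →ₗ[R] D)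
    (hStr : ∀ (i j : Fin (m + n)) (α : ZMod 2) (a : D), a ∈ S.grade α →
      Str (Matrix.single i j a) =
        if i = j then ((-1 : ℤ) ^ (pgr m i * (pgr m i + α)).val) • a else 0)
    (α β : ZMod 2) (x y : Matrix (Fin (m + n)) (Fin (m + n)) D)
    (hx : x ∈ glGrade S m n α) (hy : y ∈ glGrade S m n β) :
    Str (mLd S x y - ssign α β • mRd S y x) ∈ commSub S := by
  rw [map_sub, map_zsmul]
  have h1 : Str (mLd S x y) = ∑ i : Fin (m + n), ∑ k : Fin (m + n),
      ((-1 : ℤ) ^ (pgr m i * (pgr m i + (α + β))).val) • S.ld (x i k) (y k i) :=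
    Str_mulLike S m n Str hStr S.ld S.ld_mem α β x y hx hy
  have h2 : Str (mRd S y x) = ∑ i : Fin (m + n), ∑ k : Fin (m + n),
      ((-1 : ℤ) ^ (pgr m i * (pgr m i + (β + α))).val) • S.rd (y i k) (x k i) :=
    Str_mulLike S m n Str hStr S.rd S.rd_mem β α y x hy hx
  rw [h1, h2]
  have h3 : ssign α β • (∑ i : Fin (m + n), ∑ k : Fin (m + n),
        ((-1 : ℤ) ^ (pgr m i * (pgr m i + (β + α))).val) • S.rd (y i k) (x k i)) =
      ∑ i : Fin (m + n), ∑ k : Fin (m + n),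
        (ssign α β * (-1 : ℤ) ^ (pgr m k * (pgr m k + (β + α))).val) • S.rd (y k i) (x i k) := by
    rw [Finset.sum_comm, Finset.smul_sum]
    refine Finset.sum_congr rfl fun i _ => ?_
    rw [Finset.smul_sum]
    refine Finset.sum_congr rfl fun k _ => ?_
    rw [smul_smul]
  rw [h3, ← Finset.sum_sub_distrib]
  apply Submodule.sum_mem
  intro i _
  rw [← Finset.sum_sub_distrib]
  apply Submodule.sum_mem
  intro k _
  have hg : S.ld (x i k) (y k i) -
      ssign (α + pgr m i + pgr m k) (β + pgr m k + pgr m i) • S.rd (y k i) (x i k) ∈ commGens S :=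
    ⟨_, _, _, _, hx i k, hy k i, rfl⟩
  have hsgn : (-1 : ℤ) ^ (pgr m i * (pgr m i + (α + β))).val *
        ssign (α + pgr m i + pgr m k) (β + pgr m k + pgr m i) =
      ssign α β * (-1 : ℤ) ^ (pgr m k * (pgr m k + (β + α))).val := by
    have hd : ∀ p q a b : ZMod 2, (-1 : ℤ) ^ ((p * (p + (a + b))).val) *
          (-1 : ℤ) ^ (((a + p + q) * (b + q + p)).val) =
        (-1 : ℤ) ^ ((a * b).val) * (-1 : ℤ) ^ ((q * (q + (b + a))).val) := by decide
    simpa [ssign] using hd (pgr m i) (pgr m k) α β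
  have key : ((-1 : ℤ) ^ (pgr m i * (pgr m i + (α + β))).val) •
        (S.ld (x i k) (y k i) -
          ssign (α + pgr m i + pgr m k) (β + pgr m k + pgr m i) • S.rd (y k i) (x i k)) =
      ((-1 : ℤ) ^ (pgr m i * (pgr m i + (α + β))).val) • S.ld (x i k) (y k i) -
        (ssign α β * (-1 : ℤ) ^ (pgr m k * (pgr m k + (β + α))).val) • S.rd (y k i) (x i k) := by
    rw [smul_sub, smul_smul, hsgn]
  rw [← key]
  exact (commSub S).toAddSubgroup.zsmul_mem (Submodule.subset_span hg) _

end Aux4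
section Aux5
variable {R D : Type*} [CommRing R] [AddCommGroup D] [Module R D]

/-- The sign-twisting involution `a ↦ Σ_α (−1)^{p(p+α)} a_α`. -/
noncomputable def thetaL (S : Superdialgebra R D) (p : ZMod 2) : D →ₗ[R] D where
  toFun a := ∑ α : ZMod 2, ((-1 : ℤ) ^ (p * (p + α)).val) • projL S α a
  map_add' a b := by simp only [map_add, smul_add, Finset.sum_add_distrib]
  map_smul' c a := by
    simp only [map_smul, RingHom.id_apply, Finset.smul_sum]
    refine Finset.sum_congr rfl fun α _ => ?_
    rw [smul_comm]

lemma thetaL_of_mem (S : Superdialgebra R D) (p : ZMod 2) {γ : ZMod 2} {a : D}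
    (ha : a ∈ S.grade γ) :
    thetaL S p a = ((-1 : ℤ) ^ (p * (p + γ)).val) • a := by
  show (∑ α : ZMod 2, ((-1 : ℤ) ^ (p * (p + α)).val) • projL S α a) = _
  rw [Finset.sum_eq_single γ]
  · rw [projL_of_mem ha]
  · intro β _ hβ
    rw [projL_of_ne ha (Ne.symm hβ), smul_zero]
  · intro h; exact absurd (Finset.mem_univ γ) h

lemma thetaL_commSub (S : Superdialgebra R D) (p : ZMod 2) {c : D} (hc : c ∈ commSub S) :
    thetaL S p c ∈ commSub S := by
  induction hc using Submodule.span_induction with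
  | mem z hz =>
    obtain ⟨α, β, a, b, ha, hb, rfl⟩ := hz
    have hmem : S.ld a b - ssign α β • S.rd b a ∈ S.grade (α + β) := by
      refine Submodule.sub_mem _ (S.ld_mem α β a b ha hb) ?_
      refine (S.grade (α + β)).toAddSubgroup.zsmul_mem ?_ _
      have := S.rd_mem β α b a hb ha
      rwa [add_comm β α] at this
    rw [thetaL_of_mem S p hmem]
    exact (commSub S).toAddSubgroup.zsmul_mem (Submodule.subset_span ⟨α, β, a, b, ha, hb, rfl⟩) _
  | zero => rw [map_zero]; exact Submodule.zero_mem _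
  | add u v _ _ hu hv => rw [map_add]; exact Submodule.add_mem _ hu hv
  | smul r u _ hu => rw [map_smul]; exact Submodule.smul_mem _ r hu

/-- Off-diagonal homogeneous matrix units lie in `sl`. -/
lemma sl_offdiag (S : Superdialgebra R D) (e : D) (he : IsBarUnit S e) (m n : ℕ)
    {i j : Fin (m + n)} (hij : i ≠ j) {γ : ZMod 2} {a : D} (ha : a ∈ S.grade γ) :
    Matrix.single i j a ∈ slSub S m n := by
  apply Submodule.subset_span
  refine ⟨γ + pgr m i + pgr m j, 0 + pgr m j + pgr m j,
    Matrix.single i j a, Matrix.single j j e,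
    std_mem_glGrade S m n i j ha, std_mem_glGrade S m n j j he.1, ?_⟩
  rw [mLd_std, mRd_std, if_pos rfl, if_neg (Ne.symm hij), (he.2 a).1, smul_zero, sub_zero]

/-- The diagonal relation: `e_ii(a) − σ_i σ_0 e_00(a) ∈ sl` for `i ≠ i₀`. -/
lemma sl_diag (S : Superdialgebra R D) (e : D) (he : IsBarUnit S e) (m n : ℕ)
    {i j : Fin (m + n)} (hij : i ≠ j) {γ : ZMod 2} {a : D} (ha : a ∈ S.grade γ) :
    Matrix.single j j a -
      ((-1 : ℤ) ^ (pgr m j * (pgr m j + γ)).val * (-1 : ℤ) ^ (pgr m i * (pgr m i + γ)).val) •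
        Matrix.single i i a ∈ slSub S m n := by
  have hz : Matrix.single i i a -
      ssign (γ + pgr m i + pgr m j) (0 + pgr m j + pgr m i) •
        Matrix.single j j (S.rd e a) ∈ slSub S m n := by
    apply Submodule.subset_span
    refine ⟨γ + pgr m i + pgr m j, 0 + pgr m j + pgr m i,
      Matrix.single i j a, Matrix.single j i e,
      std_mem_glGrade S m n i j ha, std_mem_glGrade S m n j i he.1, ?_⟩
    rw [mLd_std, mRd_std, if_pos rfl, if_pos rfl, (he.2 a).1]
  rw [(he.2 a).2] at hz
  have hz2 := (slSub S m n).toAddSubgroup.zsmul_mem hz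
    (-((-1 : ℤ) ^ (pgr m j * (pgr m j + γ)).val * (-1 : ℤ) ^ (pgr m i * (pgr m i + γ)).val))
  have hone : (-((-1 : ℤ) ^ (pgr m j * (pgr m j + γ)).val *
        (-1 : ℤ) ^ (pgr m i * (pgr m i + γ)).val)) *
      ssign (γ + pgr m i + pgr m j) (0 + pgr m j + pgr m i) = -1 := by
    have hd : ∀ p q g : ZMod 2, (-((-1 : ℤ) ^ ((q * (q + g)).val) *
          (-1 : ℤ) ^ ((p * (p + g)).val))) *
        (-1 : ℤ) ^ (((g + p + q) * (0 + q + p)).val) = -1 := by decide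
    simpa [ssign] using hd (pgr m i) (pgr m j) γ
  rw [smul_sub, smul_smul, hone, neg_smul, neg_smul, one_smul, sub_neg_eq_add,
    neg_add_eq_sub] at hz2
  exact hz2

end Aux5
section Aux6
variable {R D : Type*} [CommRing R] [AddCommGroup D] [Module R D]

/-- Diagonal matrix units with entry in `[D,D]` lie in `sl`. -/
lemma sl_e00 (S : Superdialgebra R D) (m n : ℕ) (i0 : Fin (m + n)) {c : D}
    (hc : c ∈ commSub S) : Matrix.single i0 i0 c ∈ slSub S m n := by
  have hle : commSub S ≤ Submodule.comap (stdL (R := R) (m + n) i0 i0) (slSub S m n) := by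
    apply Submodule.span_le.2
    rintro z ⟨α, β, a, b, ha, hb, rfl⟩
    show Matrix.single i0 i0 (S.ld a b - ssign α β • S.rd b a) ∈ slSub S m n
    have key : mLd S (Matrix.single i0 i0 a) (Matrix.single i0 i0 b) -
        ssign (α + pgr m i0 + pgr m i0) (β + pgr m i0 + pgr m i0) •
          mRd S (Matrix.single i0 i0 b) (Matrix.single i0 i0 a) =
        Matrix.single i0 i0 (S.ld a b - ssign α β • S.rd b a) := by
      rw [mLd_std, mRd_std, if_pos rfl, if_pos rfl]
      have hs : ssign (α + pgr m i0 + pgr m i0) (β + pgr m i0 + pgr m i0) = ssign α β := by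
        have hd : ∀ p u v : ZMod 2, ssign (u + p + p) (v + p + p) = ssign u v := by decide
        exact hd _ _ _
      rw [hs]
      have h1 := map_sub (stdL (R := R) (m + n) i0 i0) (S.ld a b) (ssign α β • S.rd b a)
      rw [map_zsmul] at h1
      exact h1.symm
    rw [← key]
    exact Submodule.subset_span ⟨_, _, _, _, std_mem_glGrade S m n i0 i0 ha,
      std_mem_glGrade S m n i0 i0 hb, rfl⟩
  exact hle hc

/-- Every matrix is congruent mod `sl` to `e₀₀` of the (twisted) supertrace. -/
lemma lemA (S : Superdialgebra R D) (e : D) (he : IsBarUnit S e) (m n : ℕ)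
    (i0 : Fin (m + n))
    (Str : Matrix (Fin (m + n)) (Fin (m + n)) D →ₗ[R] D)
    (hStr : ∀ (i j : Fin (m + n)) (α : ZMod 2) (a : D), a ∈ S.grade α →
      Str (Matrix.single i j a) =
        if i = j then ((-1 : ℤ) ^ (pgr m i * (pgr m i + α)).val) • a else 0)
    (x : Matrix (Fin (m + n)) (Fin (m + n)) D) :
    x - Matrix.single i0 i0 (thetaL S (pgr m i0) (Str x)) ∈ slSub S m n := by
  set f : Matrix (Fin (m + n)) (Fin (m + n)) D →ₗ[R] Matrix (Fin (m + n)) (Fin (m + n)) D :=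
    LinearMap.id - (stdL (R := R) (m + n) i0 i0) ∘ₗ (thetaL S (pgr m i0)) ∘ₗ Str with hf
  have hx : x ∈ Submodule.comap f (slSub S m n) := by
    apply matrix_span S
    intro i j γ a ha
    rw [Submodule.mem_comap]
    have hfx : f (Matrix.single i j a) = Matrix.single i j a -
        Matrix.single i0 i0 (thetaL S (pgr m i0) (Str (Matrix.single i j a))) :=
      rfl
    rw [hfx, hStr i j γ a ha]
    by_cases hij : i = j
    · subst hij
      rw [if_pos rfl, map_zsmul, thetaL_of_mem S _ ha]
      have h1 : Matrix.single i0 i0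
          (((-1 : ℤ) ^ (pgr m i * (pgr m i + γ)).val) •
            ((-1 : ℤ) ^ (pgr m i0 * (pgr m i0 + γ)).val) • a) =
          (((-1 : ℤ) ^ (pgr m i * (pgr m i + γ)).val) *
            ((-1 : ℤ) ^ (pgr m i0 * (pgr m i0 + γ)).val)) •
            Matrix.single i0 i0 a := by
        rw [smul_smul]
        exact map_zsmul (stdL (R := R) (m + n) i0 i0) _ _
      rw [h1]
      by_cases hii : i = i0
      · subst hii
        have hone : ((-1 : ℤ) ^ (pgr m i * (pgr m i + γ)).val) *
            ((-1 : ℤ) ^ (pgr m i * (pgr m i + γ)).val) = 1 := by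
          have hd : ∀ p g : ZMod 2,
              ((-1 : ℤ) ^ ((p * (p + g)).val)) * ((-1 : ℤ) ^ ((p * (p + g)).val)) = 1 := by
            decide
          exact hd _ _
        rw [hone, one_smul, sub_self]
        exact Submodule.zero_mem _
      · exact sl_diag S e he m n (Ne.symm hii) ha
    · rw [if_neg hij, map_zero]
      have h0 : Matrix.single i0 i0 (0 : D) = 0 :=
        map_zero (stdL (R := R) (m + n) i0 i0)
      rw [h0, sub_zero]
      exact sl_offdiag S e he m n hij ha
  exact hx

end Aux6
/-- for a unital superdialgebra `D` and `m + n ≥ 2`,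
`sl(m,n,D) = {x ∈ gl(m,n,D) : Str₁(x) ∈ [D,D]}`, where `Str₁` is the supertrace, the
linear map determined on matrix units with homogeneous entry `a` of degree `α` by
`Str₁(e_ij(a)) = (−1)^{p(i)(p(i)+α)} a` if `i = j` and `0` otherwise. -/
theorem sl_eq_supertrace_preimage
    (S : Superdialgebra R D) (e : D) (he : IsBarUnit S e)
    (m n : ℕ) (hmn : 2 ≤ m + n) :
    (∃ Str : Matrix (Fin (m + n)) (Fin (m + n)) D →ₗ[R] D,
      ∀ (i j : Fin (m + n)) (α : ZMod 2) (a : D), a ∈ S.grade α →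
        Str (Matrix.single i j a) =
          if i = j then ((-1 : ℤ) ^ (pgr m i * (pgr m i + α)).val) • a else 0) ∧
    (∀ Str : Matrix (Fin (m + n)) (Fin (m + n)) D →ₗ[R] D,
      (∀ (i j : Fin (m + n)) (α : ZMod 2) (a : D), a ∈ S.grade α →
        Str (Matrix.single i j a) =
          if i = j then ((-1 : ℤ) ^ (pgr m i * (pgr m i + α)).val) • a else 0) →
      slSub S m n = Submodule.comap Str (commSub S)) := by
  constructor
  · exact ⟨StrDef S m n, StrDef_spec S m n⟩
  · intro Str hStr
    apply le_antisymm
    · apply Submodule.span_le.2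
      rintro z ⟨α, β, x, y, hx, hy, rfl⟩
      show _ ∈ Submodule.comap Str (commSub S)
      rw [Submodule.mem_comap]
      exact Str_bracket_mem S m n Str hStr α β x y hx hy
    · intro x hx
      rw [Submodule.mem_comap] at hx
      have h1 := lemA S e he m n ⟨0, by omega⟩ Str hStr x
      have h2 : thetaL S (pgr m (⟨0, by omega⟩ : Fin (m + n))) (Str x) ∈ commSub S :=
        thetaL_commSub S _ hx
      have h3 := sl_e00 S m n (⟨0, by omega⟩ : Fin (m + n)) h2
      have h4 := Submodule.add_mem _ h1 h3
      rwa [sub_add_cancel] at h4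
end
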